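/- For any group G and G-module A, the maps τᵢ (1 ≤ i ≤ n) on Cⁿ(G,A) defined by Staic satisfy τᵢ² = id, τᵢτⱼ = τⱼτᵢ for |i−j| ≥ 2, and τᵢτᵢ₊₁τᵢ = τᵢ₊₁τᵢτᵢ₊₁, hence define an action of the symmetric group Σₙ₊₁ on Cⁿ(G,A). -/

import Mathlib

variable {G A : Type*} [Group G] [AddCommGroup A] [DistribMulAction G A]

/-- The tuple of arguments appearing in Staic's action of the adjacent
transposition `τ_{i+1}` (here indexed by `i : Fin n`, so `i = 0` corresponds
to `τ₁`) on inhomogeneous `n`-cochains: the entries `(g_{i-1}, g_i, g_{i+1})`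
are replaced by `(g_{i-1}g_i, g_i⁻¹, g_i g_{i+1})`. -/
def staicArg {G : Type*} [Group G] {n : ℕ} (i : Fin n) (g : Fin n → G) : Fin n → G :=
  fun j =>
    if (j : ℕ) + 1 = (i : ℕ) then g j * g i
    else if j = i then (g i)⁻¹
    else if (j : ℕ) = (i : ℕ) + 1 then g i * g j
    else g j

/-- Staic's action of the adjacent transposition `τ_{i+1}` of `Σ_{n+1}` on the
group `Cⁿ(G,A)` of inhomogeneous `n`-cochains (functions `Gⁿ → A`):
`(τ₁σ)(g₁,…,gₙ) = −g₁·σ(g₁⁻¹, g₁g₂, g₃,…,gₙ)`,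
`(τᵢσ)(g₁,…,gₙ) = −σ(g₁,…,g_{i−2}, g_{i−1}gᵢ, gᵢ⁻¹, gᵢg_{i+1}, g_{i+2},…,gₙ)` for `1 < i < n`,
`(τₙσ)(g₁,…,gₙ) = −σ(g₁,…,g_{n−1}gₙ, gₙ⁻¹)`. -/
def staicTau (n : ℕ) (i : Fin n) (σ : (Fin n → G) → A) : (Fin n → G) → A :=
  fun g => if (i : ℕ) = 0 then -(g i • σ (staicArg i g)) else -σ (staicArg i g)

namespace StaicAux

variable {n : ℕ}

/-- partial products: `pp g k = g 0 * g 1 * ⋯ * g (k-1)`. -/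
def pp (g : Fin n → G) : Fin (n + 1) → G := fun k => ((List.ofFn g).take k).prod

lemma pp_zero (g : Fin n → G) : pp g 0 = 1 := by simp [pp]

lemma pp_succ (g : Fin n → G) (i : Fin n) :
    pp g i.succ = pp g i.castSucc * g i := by
  have h : (i : ℕ) < (List.ofFn g).length := by simp [i.isLt]
  simp only [pp, Fin.val_succ, Fin.coe_castSucc, List.prod_take_succ _ _ h,
    List.getElem_ofFn]

/-- From inhomogeneous to homogeneous cochains. -/
def toHom (σ : (Fin n → G) → A) : (Fin (n + 1) → G) → A :=
  fun x => x 0 • σ (fun i => (x i.castSucc)⁻¹ * x i.succ)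

/-- From homogeneous to inhomogeneous cochains. -/
def toInhom (f : (Fin (n + 1) → G) → A) : (Fin n → G) → A := fun g => f (pp g)

/-- The (signed) permutation action on homogeneous cochains. -/
def permAct (π : Equiv.Perm (Fin (n + 1))) (f : (Fin (n + 1) → G) → A) :
    (Fin (n + 1) → G) → A :=
  fun x => ((Equiv.Perm.sign π : ℤˣ) : ℤ) • f (x ∘ π)

def Equivariant (f : (Fin (n + 1) → G) → A) : Prop :=
  ∀ (c : G) (x : Fin (n + 1) → G), f (fun k => c * x k) = c • f x

lemma toHom_equivariant (σ : (Fin n → G) → A) : Equivariant (toHom σ) := by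
  intro c x
  have harg : (fun i : Fin n => (c * x i.castSucc)⁻¹ * (c * x i.succ))
      = fun i => (x i.castSucc)⁻¹ * x i.succ := by
    funext i; group
  simp only [toHom, mul_smul, harg]

lemma permAct_equivariant (π : Equiv.Perm (Fin (n + 1))) {f : (Fin (n + 1) → G) → A}
    (hf : Equivariant f) : Equivariant (permAct π f) := by
  intro c x
  simp only [permAct]
  have h : ((fun k => c * x k) ∘ ⇑π) = fun k => c * (x ∘ ⇑π) k := rfl
  rw [h, hf c (x ∘ ⇑π)]
  exact ((DistribMulAction.toAddMonoidHom A c).map_zsmul _ _).symm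

lemma toInhom_toHom (σ : (Fin n → G) → A) : toInhom (toHom σ) = σ := by
  funext g
  simp only [toInhom, toHom, pp_zero, one_smul]
  congr 1
  funext i
  rw [pp_succ]
  group

lemma toHom_toInhom {f : (Fin (n + 1) → G) → A} (hf : Equivariant f) :
    toHom (toInhom f) = f := by
  funext x
  simp only [toHom, toInhom]
  have hpp : pp (fun i : Fin n => (x i.castSucc)⁻¹ * x i.succ) = fun k => (x 0)⁻¹ * x k := by
    funext k
    induction k using Fin.induction with
    | zero => simp [pp_zero]
    | succ i ih =>
        rw [pp_succ, ih]
        have : (i.castSucc : Fin (n+1)) = (i : Fin n).castSucc := rfl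
        group
  rw [hpp, hf ((x 0)⁻¹) x, smul_smul, mul_inv_cancel, one_smul]

lemma permAct_one (f : (Fin (n + 1) → G) → A) : permAct 1 f = f := by
  funext x
  simp [permAct]

lemma permAct_mul (π₁ π₂ : Equiv.Perm (Fin (n + 1))) (f : (Fin (n + 1) → G) → A) :
    permAct (π₁ * π₂) f = permAct π₁ (permAct π₂ f) := by
  funext x
  simp only [permAct, Function.comp, smul_smul]
  rw [map_mul]
  push_cast
  ring_nf
  rfl

/-- Staic's `τ` as an additive endomorphism, for any permutation. -/
def T (π : Equiv.Perm (Fin (n + 1))) :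
    ((Fin n → G) → A) →+ ((Fin n → G) → A) where
  toFun σ := toInhom (permAct π (toHom σ))
  map_zero' := by
    funext g
    simp [toInhom, permAct, toHom]
  map_add' σ₁ σ₂ := by
    funext g
    simp [toInhom, permAct, toHom, smul_add]

lemma T_apply (π : Equiv.Perm (Fin (n + 1))) (σ : (Fin n → G) → A) :
    T π σ = toInhom (permAct π (toHom σ)) := rfl

lemma T_one : (T 1 : ((Fin n → G) → A) →+ ((Fin n → G) → A)) = AddMonoidHom.id _ := by
  ext σ
  simp [T_apply, permAct_one, toInhom_toHom]

lemma T_mul (π₁ π₂ : Equiv.Perm (Fin (n + 1))) (σ : (Fin n → G) → A) :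
    T (π₁ * π₂) σ = T π₁ (T π₂ σ) := by
  simp only [T_apply]
  rw [toHom_toInhom (permAct_equivariant π₂ (toHom_equivariant σ)), permAct_mul]

/-- The action of the symmetric group. -/
def rho : Equiv.Perm (Fin (n + 1)) →* Multiplicative (AddAut ((Fin n → G) → A)) where
  toFun π := Multiplicative.ofAdd
    { toFun := T π
      invFun := T π⁻¹
      left_inv := fun σ => by rw [← T_mul, inv_mul_cancel, T_one]; rfl
      right_inv := fun σ => by rw [← T_mul, mul_inv_cancel, T_one]; rfl
      map_add' := (T π).map_add }
  map_one' := by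
    refine (AddEquiv.ext fun σ => ?_ : (_ : AddAut ((Fin n → G) → A)) = _)
    show T 1 σ = σ
    rw [T_one]; rfl
  map_mul' π₁ π₂ := by
    refine (AddEquiv.ext fun σ => ?_ : (_ : AddAut ((Fin n → G) → A)) = _)
    exact T_mul π₁ π₂ σ

lemma rho_apply (π : Equiv.Perm (Fin (n + 1))) (σ : (Fin n → G) → A) :
    Multiplicative.toAdd (rho π : Multiplicative (AddAut ((Fin n → G) → A))) σ = T π σ := rfl

lemma mul_apply' (a b : Multiplicative (AddAut ((Fin n → G) → A))) (x : (Fin n → G) → A) :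
    Multiplicative.toAdd (a * b) x = Multiplicative.toAdd a (Multiplicative.toAdd b x) := rfl

lemma castSucc_ne_succ (i : Fin n) : (i.castSucc : Fin (n + 1)) ≠ i.succ := by
  simp [Fin.ext_iff]

lemma T_swap (i : Fin n) (σ : (Fin n → G) → A) :
    T (Equiv.swap i.castSucc i.succ) σ = staicTau n i σ := by
  funext g
  set s := Equiv.swap (i.castSucc : Fin (n + 1)) i.succ with hs
  have hsign : ((Equiv.Perm.sign s : ℤˣ) : ℤ) = -1 := by
    rw [hs, Equiv.Perm.sign_swap (castSucc_ne_succ i)]; rfl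
  have harg : (fun j : Fin n => ((pp g ∘ s) j.castSucc)⁻¹ * (pp g ∘ s) j.succ)
      = staicArg i g := by
    funext j
    simp only [Function.comp]
    by_cases h1 : (j : ℕ) + 1 = (i : ℕ)
    · have hjs : (j.succ : Fin (n + 1)) = i.castSucc := by
        simp only [Fin.ext_iff, Fin.coe_castSucc, Fin.val_succ]; omega
      have hcne1 : (j.castSucc : Fin (n + 1)) ≠ i.castSucc := by
        simp only [ne_eq, Fin.ext_iff, Fin.coe_castSucc, Fin.val_succ, Fin.val_zero]; omega
      have hcne2 : (j.castSucc : Fin (n + 1)) ≠ i.succ := by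
        simp only [ne_eq, Fin.ext_iff, Fin.coe_castSucc, Fin.val_succ, Fin.val_zero]; omega
      rw [hjs, hs, Equiv.swap_apply_left, Equiv.swap_apply_of_ne_of_ne hcne1 hcne2]
      rw [pp_succ, ← hjs, pp_succ]
      simp only [staicArg, if_pos h1]
      group
    · by_cases h2 : j = i
      · subst h2
        rw [hs, Equiv.swap_apply_left, Equiv.swap_apply_right]
        rw [pp_succ]
        simp only [staicArg, if_neg h1, eq_self_iff_true, if_true]
        group
      · by_cases h3 : (j : ℕ) = (i : ℕ) + 1
        · have hjc : (j.castSucc : Fin (n + 1)) = i.succ := by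
            simp only [Fin.ext_iff, Fin.coe_castSucc, Fin.val_succ]; omega
          have hsne1 : (j.succ : Fin (n + 1)) ≠ i.castSucc := by
            simp only [ne_eq, Fin.ext_iff, Fin.coe_castSucc, Fin.val_succ, Fin.val_zero]; omega
          have hsne2 : (j.succ : Fin (n + 1)) ≠ i.succ := by
            simp only [ne_eq, Fin.ext_iff, Fin.coe_castSucc, Fin.val_succ, Fin.val_zero]; omega
          rw [hjc, hs, Equiv.swap_apply_right, Equiv.swap_apply_of_ne_of_ne hsne1 hsne2]
          rw [pp_succ, hjc, pp_succ]
          simp only [staicArg, if_neg h1, if_neg h2, if_pos h3]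
          group
        · have hji : (j : ℕ) ≠ (i : ℕ) := fun h => h2 (Fin.ext h)
          have hcne1 : (j.castSucc : Fin (n + 1)) ≠ i.castSucc := by
            simp only [ne_eq, Fin.ext_iff, Fin.coe_castSucc, Fin.val_succ, Fin.val_zero]; omega
          have hcne2 : (j.castSucc : Fin (n + 1)) ≠ i.succ := by
            simp only [ne_eq, Fin.ext_iff, Fin.coe_castSucc, Fin.val_succ, Fin.val_zero]; omega
          have hsne1 : (j.succ : Fin (n + 1)) ≠ i.castSucc := by
            simp only [ne_eq, Fin.ext_iff, Fin.coe_castSucc, Fin.val_succ, Fin.val_zero]; omega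
          have hsne2 : (j.succ : Fin (n + 1)) ≠ i.succ := by
            simp only [ne_eq, Fin.ext_iff, Fin.coe_castSucc, Fin.val_succ, Fin.val_zero]; omega
          rw [hs, Equiv.swap_apply_of_ne_of_ne hcne1 hcne2,
            Equiv.swap_apply_of_ne_of_ne hsne1 hsne2, pp_succ]
          simp only [staicArg, if_neg h1, if_neg h2, if_neg h3]
          group
  show ((Equiv.Perm.sign s : ℤˣ) : ℤ) • ((pp g ∘ s) 0 • σ _) = staicTau n i σ g
  rw [harg, hsign, neg_one_zsmul]
  by_cases h0 : (i : ℕ) = 0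
  · have hic : (i.castSucc : Fin (n + 1)) = 0 := by simp only [Fin.ext_iff, Fin.coe_castSucc, Fin.val_zero]; omega
    have : (pp g ∘ s) 0 = g i := by
      simp only [Function.comp, hs, ← hic, Equiv.swap_apply_left]
      rw [pp_succ, hic, pp_zero, one_mul]
    rw [this, staicTau, if_pos h0]
  · have hic : ((0 : Fin (n + 1))) ≠ i.castSucc := by simp only [ne_eq, Fin.ext_iff, Fin.coe_castSucc, Fin.val_succ, Fin.val_zero]; omega
    have his : ((0 : Fin (n + 1))) ≠ i.succ := by simp only [ne_eq, Fin.ext_iff, Fin.val_succ, Fin.val_zero]; omega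
    have : (pp g ∘ s) 0 = 1 := by
      simp only [Function.comp, hs, Equiv.swap_apply_of_ne_of_ne hic his, pp_zero]
    rw [this, one_smul, staicTau, if_neg h0]

lemma rho_swap (i : Fin n) (σ : (Fin n → G) → A) :
    Multiplicative.toAdd (rho (Equiv.swap i.castSucc i.succ) :
      Multiplicative (AddAut ((Fin n → G) → A))) σ = staicTau n i σ :=
  T_swap i σ

lemma swap_disjoint_commute {α : Type*} [DecidableEq α] {a b c d : α}
    (h1 : a ≠ c) (h2 : a ≠ d) (h3 : b ≠ c) (h4 : b ≠ d) :
    Equiv.swap a b * Equiv.swap c d = Equiv.swap c d * Equiv.swap a b := by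
  have hd : (Equiv.swap a b).Disjoint (Equiv.swap c d) := by
    intro x
    by_cases hxa : x = a
    · subst hxa; right; exact Equiv.swap_apply_of_ne_of_ne h1 h2
    by_cases hxb : x = b
    · subst hxb; right; exact Equiv.swap_apply_of_ne_of_ne h3 h4
    · left; exact Equiv.swap_apply_of_ne_of_ne hxa hxb
  exact hd.commute

lemma swap_braid {α : Type*} [DecidableEq α] {a b c : α}
    (hab : a ≠ b) (hac : a ≠ c) (hbc : b ≠ c) :
    Equiv.swap a b * Equiv.swap b c * Equiv.swap a b =
      Equiv.swap b c * Equiv.swap a b * Equiv.swap b c := by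
  ext x
  by_cases hxa : x = a
  · subst hxa
    simp [Equiv.Perm.mul_apply, Equiv.swap_apply_def, hab, hac, hbc,
      Ne.symm hab, Ne.symm hac, Ne.symm hbc]
  by_cases hxb : x = b
  · subst hxb
    simp [Equiv.Perm.mul_apply, Equiv.swap_apply_def, hab, hac, hbc,
      Ne.symm hab, Ne.symm hac, Ne.symm hbc]
  by_cases hxc : x = c
  · subst hxc
    simp [Equiv.Perm.mul_apply, Equiv.swap_apply_def, hab, hac, hbc,
      Ne.symm hab, Ne.symm hac, Ne.symm hbc]
  · simp [Equiv.Perm.mul_apply, Equiv.swap_apply_def, hxa, hxb, hxc]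

end StaicAux

open StaicAux

/-- Staic's maps `τᵢ` (`1 ≤ i ≤ n`) on `Cⁿ(G,A)` satisfy `τᵢ² = id`,
`τᵢτⱼ = τⱼτᵢ` for `|i−j| ≥ 2`, and the braid relation
`τᵢτ_{i+1}τᵢ = τ_{i+1}τᵢτ_{i+1}`; hence they define an action of the symmetric
group `Σ_{n+1}` on `Cⁿ(G,A)` in which the adjacent transposition `(i, i+1)`
acts by `τᵢ`. -/
theorem staic_symmetric_group_action (n : ℕ) :
    (∀ (i : Fin n) (σ : (Fin n → G) → A), staicTau n i (staicTau n i σ) = σ) ∧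
    (∀ (i j : Fin n), (i : ℕ) + 2 ≤ (j : ℕ) ∨ (j : ℕ) + 2 ≤ (i : ℕ) →
      ∀ σ : (Fin n → G) → A, staicTau n i (staicTau n j σ) = staicTau n j (staicTau n i σ)) ∧
    (∀ (i j : Fin n), (j : ℕ) = (i : ℕ) + 1 →
      ∀ σ : (Fin n → G) → A,
        staicTau n i (staicTau n j (staicTau n i σ)) =
          staicTau n j (staicTau n i (staicTau n j σ))) ∧
    (∃ ρ : Equiv.Perm (Fin (n + 1)) →* Multiplicative (AddAut ((Fin n → G) → A)),
      ∀ (i : Fin n) (σ : (Fin n → G) → A),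
        Multiplicative.toAdd (ρ (Equiv.swap i.castSucc i.succ)) σ = staicTau n i σ) := by
  refine ⟨?_, ?_, ?_, ⟨rho, fun i σ => rho_swap i σ⟩⟩
  · intro i σ
    rw [← rho_swap i σ, ← rho_swap i, ← mul_apply', ← map_mul,
      Equiv.swap_mul_self, map_one]
    rfl
  · intro i j hij σ
    have h1 : (i.castSucc : Fin (n + 1)) ≠ j.castSucc := by
      simp only [ne_eq, Fin.ext_iff, Fin.coe_castSucc, Fin.val_succ, Fin.val_zero]; omega
    have h2 : (i.castSucc : Fin (n + 1)) ≠ j.succ := by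
      simp only [ne_eq, Fin.ext_iff, Fin.coe_castSucc, Fin.val_succ, Fin.val_zero]; omega
    have h3 : (i.succ : Fin (n + 1)) ≠ j.castSucc := by
      simp only [ne_eq, Fin.ext_iff, Fin.coe_castSucc, Fin.val_succ, Fin.val_zero]; omega
    have h4 : (i.succ : Fin (n + 1)) ≠ j.succ := by
      simp only [ne_eq, Fin.ext_iff, Fin.coe_castSucc, Fin.val_succ, Fin.val_zero]; omega
    rw [← rho_swap j σ, ← rho_swap i, ← rho_swap i σ, ← rho_swap j,
      ← mul_apply', ← mul_apply', ← map_mul, ← map_mul,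
      swap_disjoint_commute h1 h2 h3 h4]
  · intro i j hij σ
    have hbc : (j.castSucc : Fin (n + 1)) = i.succ := by
      simp only [Fin.ext_iff, Fin.coe_castSucc, Fin.val_succ]; omega
    have hab : (i.castSucc : Fin (n + 1)) ≠ i.succ := castSucc_ne_succ i
    have hac : (i.castSucc : Fin (n + 1)) ≠ j.succ := by
      simp only [ne_eq, Fin.ext_iff, Fin.coe_castSucc, Fin.val_succ, Fin.val_zero]; omega
    have hbc' : (i.succ : Fin (n + 1)) ≠ j.succ := by
      simp only [ne_eq, Fin.ext_iff, Fin.coe_castSucc, Fin.val_succ, Fin.val_zero]; omega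
    rw [← rho_swap i, ← rho_swap j, ← rho_swap i σ,
      ← rho_swap j, ← rho_swap i, ← rho_swap j σ,
      ← mul_apply', ← mul_apply', ← mul_apply', ← mul_apply',
      ← map_mul, ← map_mul, ← map_mul, ← map_mul, hbc,
      swap_braid hab hac hbc']
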